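/- The set of parameters a ∈ ℂ for which the projective curve {P − aQ = 0} is singular is finite; that is, { a ∈ ℂ : there exists (x,y,z) ∈ ℂ³ \ {0} at which P − aQ and all three of its partial derivatives vanish } is a finite set. In particular, for all but finitely many a ∈ ℂ the curve {P − aQ = 0} ⊂ ℙ² is smooth. -/

import Mathlib

open MvPolynomial

/-- The linear form `R_k = (2d+1-k)x + ky - k(2d+1-k)z` in `ℂ[x,y,z]`. -/
noncomputable def R3 (d k : ℕ) : MvPolynomial (Fin 3) ℂ :=
  C (2*(d:ℂ)+1-(k:ℂ)) * X 0 + C (k:ℂ) * X 1 - C ((k:ℂ)*(2*(d:ℂ)+1-(k:ℂ))) * X 2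

/-- `P = ∏_{k=0}^{d} R_k`. -/
noncomputable def P3 (d : ℕ) : MvPolynomial (Fin 3) ℂ :=
  ∏ k ∈ Finset.range (d+1), R3 d k

/-- `Q = ∏_{k=d+1}^{2d+1} R_k`. -/
noncomputable def Q3 (d : ℕ) : MvPolynomial (Fin 3) ℂ :=
  ∏ k ∈ Finset.Icc (d+1) (2*d+1), R3 d k

/-! ### Auxiliary univariate polynomials -/

noncomputable def nn (d : ℕ) : Polynomial ℂ :=
  ∏ k ∈ Finset.range (d+1), (Polynomial.C (k:ℂ) - Polynomial.X)

noncomputable def qq (d : ℕ) : Polynomial ℂ :=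
  ∏ k ∈ Finset.Icc (d+1) (2*d+1), (Polynomial.C (k:ℂ) - Polynomial.X)

noncomputable def hh (d : ℕ) : Polynomial ℂ :=
  (nn d).derivative * qq d - nn d * (qq d).derivative

lemma nn_eval (d : ℕ) (t : ℂ) :
    (nn d).eval t = ∏ k ∈ Finset.range (d+1), ((k:ℂ) - t) := by
  simp [nn, Polynomial.eval_prod]

lemma qq_eval (d : ℕ) (t : ℂ) :
    (qq d).eval t = ∏ k ∈ Finset.Icc (d+1) (2*d+1), ((k:ℂ) - t) := by
  simp [qq, Polynomial.eval_prod]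

lemma card_Icc' (d : ℕ) : (Finset.Icc (d+1) (2*d+1)).card = d+1 := by
  rw [Nat.card_Icc]; omega

/-- derivative of `∏ (C k - X)` at a member root is nonzero. -/
lemma deriv_prod_ne (S : Finset ℕ) (j : ℕ) (hj : j ∈ S) :
    (Polynomial.derivative (∏ k ∈ S, (Polynomial.C (k:ℂ) - Polynomial.X))).eval (j:ℂ) ≠ 0 := by
  rw [← Finset.mul_prod_erase S _ hj, Polynomial.derivative_mul]
  simp only [Polynomial.derivative_sub, Polynomial.derivative_C, Polynomial.derivative_X, zero_sub]
  rw [Polynomial.eval_add, Polynomial.eval_mul, Polynomial.eval_mul]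
  simp only [Polynomial.eval_sub, Polynomial.eval_C, Polynomial.eval_X, sub_self, zero_mul,
    add_zero, Polynomial.eval_neg, Polynomial.eval_one, Polynomial.eval_prod]
  rw [neg_one_mul, neg_ne_zero]
  refine Finset.prod_ne_zero_iff.2 fun k hk => ?_
  have : k ≠ j := (Finset.mem_erase.1 hk).1
  simp only [Polynomial.eval_sub, Polynomial.eval_C, Polynomial.eval_X, sub_ne_zero]
  exact_mod_cast fun h => this (Nat.cast_injective h)

/-- roots of `nn` and `qq` are disjoint. -/
lemma nn_qq_disj (d : ℕ) (w : ℂ) (h1 : (nn d).eval w = 0) (h2 : (qq d).eval w = 0) : False := by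
  rw [nn_eval] at h1; rw [qq_eval] at h2
  obtain ⟨k1, hk1, hk1'⟩ := Finset.prod_eq_zero_iff.1 h1
  obtain ⟨k2, hk2, hk2'⟩ := Finset.prod_eq_zero_iff.1 h2
  have hc : (k1:ℂ) = (k2:ℂ) := by
    have e1 := sub_eq_zero.1 hk1'
    have e2 := sub_eq_zero.1 hk2'
    rw [e1, e2]
  have : k1 = k2 := Nat.cast_injective hc
  have b1 : k1 < d + 1 := Finset.mem_range.1 hk1
  have b2 : d + 1 ≤ k2 := (Finset.mem_Icc.1 hk2).1
  omega

/-! ### key evaluation identities -/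

lemma eval_R3 (d k : ℕ) (x y z u v : ℂ)
    (h1 : z*(u+v) = x - y + (2*(d:ℂ)+1)*z) (h2 : z*(u*v) = (2*(d:ℂ)+1)*x) :
    eval ![x, y, z] (R3 d k) = z * ((k:ℂ) - u) * ((k:ℂ) - v) := by
  simp only [R3, map_sub, map_add, map_mul, eval_C, eval_X]
  simp only [Matrix.cons_val_zero, Matrix.cons_val_one, Matrix.head_cons,
    Matrix.cons_val_two, Matrix.tail_cons]
  linear_combination (k:ℂ) * h1 - h2

lemma eval_R3' (d k : ℕ) (x y u : ℂ) (h : (y - x) * u = -((2*(d:ℂ)+1) * x)) :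
    eval ![x, y, 0] (R3 d k) = (y - x) * ((k:ℂ) - u) := by
  simp only [R3, map_sub, map_add, map_mul, eval_C, eval_X]
  simp only [Matrix.cons_val_zero, Matrix.cons_val_one, Matrix.head_cons,
    Matrix.cons_val_two, Matrix.tail_cons]
  linear_combination h

lemma eval_P3 (d : ℕ) (x y z u v : ℂ)
    (h1 : z*(u+v) = x - y + (2*(d:ℂ)+1)*z) (h2 : z*(u*v) = (2*(d:ℂ)+1)*x) :
    eval ![x, y, z] (P3 d) = z^(d+1) * ((nn d).eval u * (nn d).eval v) := by
  rw [P3, map_prod]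
  rw [Finset.prod_congr rfl (fun k _ => eval_R3 d k x y z u v h1 h2)]
  rw [nn_eval, nn_eval]
  rw [Finset.prod_mul_distrib, Finset.prod_mul_distrib, Finset.prod_const, Finset.card_range]
  ring

lemma eval_Q3 (d : ℕ) (x y z u v : ℂ)
    (h1 : z*(u+v) = x - y + (2*(d:ℂ)+1)*z) (h2 : z*(u*v) = (2*(d:ℂ)+1)*x) :
    eval ![x, y, z] (Q3 d) = z^(d+1) * ((qq d).eval u * (qq d).eval v) := by
  rw [Q3, map_prod]
  rw [Finset.prod_congr rfl (fun k _ => eval_R3 d k x y z u v h1 h2)]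
  rw [qq_eval, qq_eval]
  rw [Finset.prod_mul_distrib, Finset.prod_mul_distrib, Finset.prod_const, card_Icc']
  ring

lemma eval_P3' (d : ℕ) (x y u : ℂ) (h : (y - x) * u = -((2*(d:ℂ)+1) * x)) :
    eval ![x, y, 0] (P3 d) = (y-x)^(d+1) * (nn d).eval u := by
  rw [P3, map_prod, Finset.prod_congr rfl (fun k _ => eval_R3' d k x y u h), nn_eval]
  rw [Finset.prod_mul_distrib, Finset.prod_const, Finset.card_range]

lemma eval_Q3' (d : ℕ) (x y u : ℂ) (h : (y - x) * u = -((2*(d:ℂ)+1) * x)) :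
    eval ![x, y, 0] (Q3 d) = (y-x)^(d+1) * (qq d).eval u := by
  rw [Q3, map_prod, Finset.prod_congr rfl (fun k _ => eval_R3' d k x y u h), qq_eval]
  rw [Finset.prod_mul_distrib, Finset.prod_const, card_Icc']

/-! ### chain rule -/

lemma chainRule (x y z α β : ℂ) (E : MvPolynomial (Fin 3) ℂ) (t₀ : ℂ) :
    HasDerivAt (fun t : ℂ => eval ![x + t * α, y + t * β, z] E)
      (α * eval ![x + t₀ * α, y + t₀ * β, z] (pderiv 0 E) +
       β * eval ![x + t₀ * α, y + t₀ * β, z] (pderiv 1 E)) t₀ := by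
  induction E using MvPolynomial.induction_on with
  | C c => simpa using hasDerivAt_const t₀ c
  | add p q hp hq =>
      have h := hp.add hq
      simp only [map_add] at h ⊢
      refine h.congr_deriv ?_
      ring
  | mul_X p i hp =>
      have hcoord : HasDerivAt (fun t : ℂ => (![x + t * α, y + t * β, z] : Fin 3 → ℂ) i)
          ((![α, β, 0] : Fin 3 → ℂ) i) t₀ := by
        fin_cases i
        · simpa using ((hasDerivAt_id t₀).mul_const α).const_add x
        · simpa using ((hasDerivAt_id t₀).mul_const β).const_add y
        · simpa using hasDerivAt_const t₀ z
      have h := hp.mul hcoord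
      have e1 : ∀ t : ℂ, eval ![x + t * α, y + t * β, z] (p * X i)
          = eval ![x + t * α, y + t * β, z] p * (![x + t * α, y + t * β, z] : Fin 3 → ℂ) i := by
        intro t; simp [eval_mul, eval_X]
      simp only [e1]
      fin_cases i
      · simp only [pderiv_mul, pderiv_X_self, pderiv_X_of_ne (show (0:Fin 3) ≠ 1 by decide),
          map_add, map_mul, eval_X, map_one, mul_one, mul_zero, add_zero, map_zero] at h ⊢
        refine h.congr_deriv ?_
        simp [Matrix.cons_val_zero]
        ring
      · simp only [pderiv_mul, pderiv_X_self, pderiv_X_of_ne (show (1:Fin 3) ≠ 0 by decide),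
          map_add, map_mul, eval_X, map_one, mul_one, mul_zero, add_zero, map_zero] at h ⊢
        refine h.congr_deriv ?_
        simp
        ring
      · simp only [pderiv_mul, pderiv_X_of_ne (show (2:Fin 3) ≠ 0 by decide),
          pderiv_X_of_ne (show (2:Fin 3) ≠ 1 by decide),
          map_add, map_mul, eval_X, map_one, mul_one, mul_zero, add_zero, map_zero] at h ⊢
        refine h.congr_deriv ?_
        simp
        ring
-- continuation: to be appended to main.lean
lemma nn_root (d : ℕ) (w : ℂ) (h : (nn d).eval w = 0) :
    ∃ k ∈ Finset.range (d+1), w = (k:ℂ) := by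
  rw [nn_eval] at h
  obtain ⟨k, hk, hk'⟩ := Finset.prod_eq_zero_iff.1 h
  exact ⟨k, hk, (sub_eq_zero.1 hk').symm⟩

lemma qq_root (d : ℕ) (w : ℂ) (h : (qq d).eval w = 0) :
    ∃ k ∈ Finset.Icc (d+1) (2*d+1), w = (k:ℂ) := by
  rw [qq_eval] at h
  obtain ⟨k, hk, hk'⟩ := Finset.prod_eq_zero_iff.1 h
  exact ⟨k, hk, (sub_eq_zero.1 hk').symm⟩

lemma nn_deriv_ne (d : ℕ) (w : ℂ) (h : (nn d).eval w = 0) :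
    (nn d).derivative.eval w ≠ 0 := by
  obtain ⟨k, hk, rfl⟩ := nn_root d w h
  rw [nn]
  exact deriv_prod_ne _ k hk

lemma qq_deriv_ne (d : ℕ) (w : ℂ) (h : (qq d).eval w = 0) :
    (qq d).derivative.eval w ≠ 0 := by
  obtain ⟨k, hk, rfl⟩ := qq_root d w h
  rw [qq]
  exact deriv_prod_ne _ k hk

lemma hh_ne (d : ℕ) : hh d ≠ 0 := by
  intro h0
  have hq0 : (qq d).eval (((d+1:ℕ)):ℂ) = 0 := by
    rw [qq_eval]
    refine Finset.prod_eq_zero (i := d+1) (by rw [Finset.mem_Icc]; omega) (by ring)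
  have hn0 : (nn d).eval (((d+1:ℕ)):ℂ) ≠ 0 := by
    rw [nn_eval]
    refine Finset.prod_ne_zero_iff.2 fun k hk => sub_ne_zero.2 ?_
    have hlt : k < d + 1 := Finset.mem_range.1 hk
    intro hc
    have : k = d + 1 := Nat.cast_injective hc
    omega
  have hq'0 : (qq d).derivative.eval (((d+1:ℕ)):ℂ) ≠ 0 := qq_deriv_ne d _ hq0
  have := congrArg (Polynomial.eval (((d+1:ℕ)):ℂ)) h0
  simp only [hh, Polynomial.eval_sub, Polynomial.eval_mul, Polynomial.eval_zero, hq0,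
    mul_zero, zero_sub, neg_eq_zero] at this
  exact (mul_ne_zero hn0 hq'0) this

lemma keyDeriv (d : ℕ) (a x y z u v α β : ℂ)
    (hkey : ∀ t : ℂ, eval ![x + t*α, y + t*β, z] (P3 d - C a * Q3 d)
        = z^(d+1) * ((nn d).eval (u+t) * (nn d).eval v - a * ((qq d).eval (u+t) * (qq d).eval v)))
    (hp0 : eval ![x,y,z] (pderiv 0 (P3 d - C a * Q3 d)) = 0)
    (hp1 : eval ![x,y,z] (pderiv 1 (P3 d - C a * Q3 d)) = 0) :
    z^(d+1) * ((nn d).derivative.eval u * (nn d).eval v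
      - a * ((qq d).derivative.eval u * (qq d).eval v)) = 0 := by
  have hd1 := chainRule x y z α β (P3 d - C a * Q3 d) 0
  simp only [zero_mul, add_zero] at hd1
  rw [hp0, hp1] at hd1
  simp only [mul_zero, add_zero] at hd1
  rw [funext hkey] at hd1
  have base_n : HasDerivAt (fun t : ℂ => (nn d).eval (u+t)) ((nn d).derivative.eval u) 0 := by
    have h1 : HasDerivAt (fun t : ℂ => u + t) 1 0 := (hasDerivAt_id 0).const_add u
    simpa [Function.comp_def] using ((nn d).hasDerivAt (u + 0)).comp 0 h1
  have base_q : HasDerivAt (fun t : ℂ => (qq d).eval (u+t)) ((qq d).derivative.eval u) 0 := by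
    have h1 : HasDerivAt (fun t : ℂ => u + t) 1 0 := (hasDerivAt_id 0).const_add u
    simpa [Function.comp_def] using ((qq d).hasDerivAt (u + 0)).comp 0 h1
  have hd2 := (((base_n.mul_const ((nn d).eval v)).sub
      ((base_q.mul_const ((qq d).eval v)).const_mul a)).const_mul (z^(d+1)))
  exact hd2.unique hd1

lemma keyDeriv' (d : ℕ) (a x y u α : ℂ)
    (hkey : ∀ t : ℂ, eval ![x + t*α, y + t*α, (0:ℂ)] (P3 d - C a * Q3 d)
        = (y-x)^(d+1) * ((nn d).eval (u+t) - a * (qq d).eval (u+t)))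
    (hp0 : eval ![x,y,0] (pderiv 0 (P3 d - C a * Q3 d)) = 0)
    (hp1 : eval ![x,y,0] (pderiv 1 (P3 d - C a * Q3 d)) = 0) :
    (y-x)^(d+1) * ((nn d).derivative.eval u - a * (qq d).derivative.eval u) = 0 := by
  have hd1 := chainRule x y 0 α α (P3 d - C a * Q3 d) 0
  simp only [zero_mul, add_zero] at hd1
  rw [hp0, hp1] at hd1
  simp only [mul_zero, add_zero] at hd1
  rw [funext hkey] at hd1
  have base_n : HasDerivAt (fun t : ℂ => (nn d).eval (u+t)) ((nn d).derivative.eval u) 0 := by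
    have h1 : HasDerivAt (fun t : ℂ => u + t) 1 0 := (hasDerivAt_id 0).const_add u
    simpa [Function.comp_def] using ((nn d).hasDerivAt (u + 0)).comp 0 h1
  have base_q : HasDerivAt (fun t : ℂ => (qq d).eval (u+t)) ((qq d).derivative.eval u) 0 := by
    have h1 : HasDerivAt (fun t : ℂ => u + t) 1 0 := (hasDerivAt_id 0).const_add u
    simpa [Function.comp_def] using ((qq d).hasDerivAt (u + 0)).comp 0 h1
  have hd2 := ((base_n.sub (base_q.const_mul a)).const_mul ((y-x)^(d+1)))
  exact hd2.unique hd1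

/-- The set of `a ∈ ℂ` for which the projective curve `{P - aQ = 0}` is singular
(i.e. `P - aQ` and all three partial derivatives have a common zero in `ℂ³ \ {0}`)
is finite; hence for all but finitely many `a` the curve is smooth. -/
theorem stmt10 (d : ℕ) (hd : 1 ≤ d) :
    {a : ℂ | ∃ x y z : ℂ, ¬(x = 0 ∧ y = 0 ∧ z = 0) ∧
      eval ![x, y, z] (P3 d - C a * Q3 d) = 0 ∧
      eval ![x, y, z] (pderiv 0 (P3 d - C a * Q3 d)) = 0 ∧
      eval ![x, y, z] (pderiv 1 (P3 d - C a * Q3 d)) = 0 ∧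
      eval ![x, y, z] (pderiv 2 (P3 d - C a * Q3 d)) = 0}.Finite := by
  classical
  set RT : Set ℂ := {t : ℂ | (hh d).eval t = 0} with hRTdef
  have hRT : RT.Finite := by
    have := (hh d).finite_setOf_isRoot (hh_ne d)
    simpa [Polynomial.IsRoot, hRTdef] using this
  set Img2 : Set ℂ := (fun p : ℂ × ℂ =>
      ((nn d).eval p.1 * (nn d).eval p.2) / ((qq d).eval p.1 * (qq d).eval p.2)) '' (RT ×ˢ RT)
    with hImg2def
  set Img1 : Set ℂ := (fun t : ℂ => (nn d).eval t / (qq d).eval t) '' RT with hImg1def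
  have hTfin : (({0, 1} : Set ℂ) ∪ Img2 ∪ Img1).Finite := by
    refine (Set.Finite.union (Set.Finite.union ?_ ?_) ?_)
    · exact (Set.finite_singleton 1).insert 0
    · exact (hRT.prod hRT).image _
    · exact hRT.image _
  refine hTfin.subset ?_
  rintro a ⟨x, y, z, hne, hE, hp0, hp1, hp2⟩
  have hS : (2*(d:ℂ)+1) ≠ 0 := by
    have h' : ((2*d+1 : ℕ):ℂ) ≠ 0 := Nat.cast_ne_zero.2 (by omega)
    push_cast at h'
    convert h' using 2
  by_cases ha0 : a = 0
  · exact Or.inl (Or.inl (by simp [ha0]))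
  by_cases ha1 : a = 1
  · exact Or.inl (Or.inl (by simp [ha1]))
  by_cases hz : z = 0
  · subst hz
    by_cases hxy : x = y
    · -- x = y, z = 0 : forces a = 1, contradiction
      exfalso
      subst hxy
      have hx : x ≠ 0 := by
        intro h
        exact hne ⟨h, h, rfl⟩
      have hfac : ∀ k : ℕ, eval ![x, x, 0] (R3 d k) = (2*(d:ℂ)+1) * x := by
        intro k
        simp only [R3, map_sub, map_add, map_mul, eval_C, eval_X]
        simp only [Matrix.cons_val_zero, Matrix.cons_val_one, Matrix.head_cons,
          Matrix.cons_val_two, Matrix.tail_cons]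
        ring
      have hP : eval ![x, x, 0] (P3 d) = ((2*(d:ℂ)+1) * x)^(d+1) := by
        rw [P3, map_prod, Finset.prod_congr rfl (fun k _ => hfac k),
          Finset.prod_const, Finset.card_range]
      have hQ : eval ![x, x, 0] (Q3 d) = ((2*(d:ℂ)+1) * x)^(d+1) := by
        rw [Q3, map_prod, Finset.prod_congr rfl (fun k _ => hfac k),
          Finset.prod_const, card_Icc']
      simp only [map_sub, map_mul, eval_C, hP, hQ] at hE
      have hpow : ((2*(d:ℂ)+1) * x)^(d+1) ≠ 0 := pow_ne_zero _ (mul_ne_zero hS hx)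
      have h1a : ((2*(d:ℂ)+1) * x)^(d+1) * (1 - a) = 0 := by linear_combination hE
      rcases mul_eq_zero.1 h1a with h | h
      · exact hpow h
      · exact ha1 (by linear_combination -h)
    · -- z = 0, x ≠ y
      have hc : y - x ≠ 0 := fun h => hxy (by linear_combination -h)
      have hxyne : x - y ≠ 0 := fun h => hxy (by linear_combination h)
      set u := (2*(d:ℂ)+1)*x/(x-y) with hudef
      have hu : (y - x) * u = -((2*(d:ℂ)+1) * x) := by
        rw [hudef]
        field_simp
        ring
      set α := -(y-x)/(2*(d:ℂ)+1) with hαdef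
      have hα : (2*(d:ℂ)+1) * α = -(y - x) := by
        rw [hαdef]; field_simp
      have hkey : ∀ t : ℂ, eval ![x + t*α, y + t*α, (0:ℂ)] (P3 d - C a * Q3 d)
          = (y-x)^(d+1) * ((nn d).eval (u+t) - a * (qq d).eval (u+t)) := by
        intro t
        have hut : ((y + t*α) - (x + t*α)) * (u+t) = -((2*(d:ℂ)+1)*(x + t*α)) := by
          linear_combination hu + t*hα
        rw [map_sub, map_mul, eval_C, eval_P3' d _ _ (u+t) hut, eval_Q3' d _ _ (u+t) hut]
        have hyx : (y + t*α) - (x + t*α) = y - x := by ring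
        rw [hyx]
        ring
      have hB0 := keyDeriv' d a x y u α hkey hp0 hp1
      have hA0 := hkey 0
      simp only [zero_mul, add_zero] at hA0
      rw [hE] at hA0
      have hpow : (y-x)^(d+1) ≠ 0 := pow_ne_zero _ hc
      have hA' : (nn d).eval u = a * (qq d).eval u := by
        rcases mul_eq_zero.1 hA0.symm with h | h
        · exact absurd h hpow
        · linear_combination h
      have hB' : (nn d).derivative.eval u = a * (qq d).derivative.eval u := by
        rcases mul_eq_zero.1 hB0 with h | h
        · exact absurd h hpow
        · linear_combination h
      have hqu : (qq d).eval u ≠ 0 := by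
        intro h0
        have hn0 : (nn d).eval u = 0 := by rw [hA', h0, mul_zero]
        exact nn_qq_disj d u hn0 h0
      have hhu : (hh d).eval u = 0 := by
        simp only [hh, Polynomial.eval_sub, Polynomial.eval_mul]
        linear_combination (qq d).eval u * hB' - (qq d).derivative.eval u * hA'
      refine Or.inr ⟨u, hhu, ?_⟩
      show (nn d).eval u / (qq d).eval u = a
      rw [div_eq_iff hqu]
      linear_combination hA'
  · -- z ≠ 0
    obtain ⟨r, hr⟩ := IsAlgClosed.exists_pow_nat_eq
      ((x - y + (2*(d:ℂ)+1)*z)^2 - 4*((2*(d:ℂ)+1)*x*z)) (n := 2) (by norm_num)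
    have h2z : (2:ℂ)*z ≠ 0 := mul_ne_zero two_ne_zero hz
    set u := ((x - y + (2*(d:ℂ)+1)*z) + r) / (2*z) with hudef
    set v := ((x - y + (2*(d:ℂ)+1)*z) - r) / (2*z) with hvdef
    have h1 : z*(u+v) = x - y + (2*(d:ℂ)+1)*z := by
      rw [hudef, hvdef]; field_simp; ring
    have h2 : z*(u*v) = (2*(d:ℂ)+1)*x := by
      rw [hudef, hvdef]; field_simp; linear_combination -hr
    -- Eq A
    simp only [map_sub, map_mul, eval_C] at hE
    rw [eval_P3 d x y z u v h1 h2, eval_Q3 d x y z u v h1 h2] at hE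
    have hzp : z^(d+1) ≠ 0 := pow_ne_zero _ hz
    have hA : (nn d).eval u * (nn d).eval v = a * ((qq d).eval u * (qq d).eval v) := by
      apply mul_left_cancel₀ hzp
      linear_combination hE
    -- Eq B
    set α := v*z/(2*(d:ℂ)+1) with hαdef
    have hα : (2*(d:ℂ)+1) * α = v * z := by rw [hαdef]; field_simp
    have hkeyB : ∀ t : ℂ, eval ![x + t*α, y + t*(α - z), z] (P3 d - C a * Q3 d)
        = z^(d+1) * ((nn d).eval (u+t) * (nn d).eval v
          - a * ((qq d).eval (u+t) * (qq d).eval v)) := by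
      intro t
      have h1t : z*((u+t)+v) = (x + t*α) - (y + t*(α - z)) + (2*(d:ℂ)+1)*z := by
        linear_combination h1
      have h2t : z*((u+t)*v) = (2*(d:ℂ)+1)*(x + t*α) := by
        linear_combination h2 - t*hα
      rw [map_sub, map_mul, eval_C, eval_P3 d _ _ z (u+t) v h1t h2t,
        eval_Q3 d _ _ z (u+t) v h1t h2t]
      ring
    have hB0 := keyDeriv d a x y z u v α (α - z) hkeyB hp0 hp1
    have hB : (nn d).derivative.eval u * (nn d).eval v
        = a * ((qq d).derivative.eval u * (qq d).eval v) := by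
      rcases mul_eq_zero.1 hB0 with h | h
      · exact absurd h hzp
      · linear_combination h
    -- Eq C (roles of u and v swapped)
    set α' := u*z/(2*(d:ℂ)+1) with hα'def
    have hα' : (2*(d:ℂ)+1) * α' = u * z := by rw [hα'def]; field_simp
    have hkeyC : ∀ t : ℂ, eval ![x + t*α', y + t*(α' - z), z] (P3 d - C a * Q3 d)
        = z^(d+1) * ((nn d).eval (v+t) * (nn d).eval u
          - a * ((qq d).eval (v+t) * (qq d).eval u)) := by
      intro t
      have h1t : z*((v+t)+u) = (x + t*α') - (y + t*(α' - z)) + (2*(d:ℂ)+1)*z := by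
        linear_combination h1
      have h2t : z*((v+t)*u) = (2*(d:ℂ)+1)*(x + t*α') := by
        linear_combination h2 - t*hα'
      rw [map_sub, map_mul, eval_C, eval_P3 d _ _ z (v+t) u h1t h2t,
        eval_Q3 d _ _ z (v+t) u h1t h2t]
      ring
    have hC0 := keyDeriv d a x y z v u α' (α' - z) hkeyC hp0 hp1
    have hC : (nn d).derivative.eval v * (nn d).eval u
        = a * ((qq d).derivative.eval v * (qq d).eval u) := by
      rcases mul_eq_zero.1 hC0 with h | h
      · exact absurd h hzp
      · linear_combination h
    -- nonvanishing of qq at u and v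
    have hqu : (qq d).eval u ≠ 0 := by
      intro h0
      have hnu : (nn d).eval u ≠ 0 := fun hn => nn_qq_disj d u hn h0
      have hnv : (nn d).eval v = 0 := by
        have hA2 := hA
        rw [h0] at hA2
        simp only [zero_mul, mul_zero] at hA2
        rcases mul_eq_zero.1 hA2 with h | h
        · exact absurd h hnu
        · exact h
      have hnv' := nn_deriv_ne d v hnv
      rw [h0] at hC
      simp only [mul_zero] at hC
      exact (mul_ne_zero hnv' hnu) hC
    have hqv : (qq d).eval v ≠ 0 := by
      intro h0
      have hnv : (nn d).eval v ≠ 0 := fun hn => nn_qq_disj d v hn h0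
      have hnu : (nn d).eval u = 0 := by
        have hA2 := hA
        rw [h0] at hA2
        simp only [mul_zero, zero_mul] at hA2
        rcases mul_eq_zero.1 hA2 with h | h
        · exact h
        · exact absurd h hnv
      have hnu' := nn_deriv_ne d u hnu
      rw [h0] at hB
      simp only [mul_zero] at hB
      exact (mul_ne_zero hnu' hnv) hB
    have hnn : (nn d).eval u * (nn d).eval v ≠ 0 := by
      rw [hA]
      exact mul_ne_zero ha0 (mul_ne_zero hqu hqv)
    have hnu : (nn d).eval u ≠ 0 := fun h => hnn (by rw [h, zero_mul])
    have hnv : (nn d).eval v ≠ 0 := fun h => hnn (by rw [h, mul_zero])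
    have hhu : (hh d).eval u = 0 := by
      have key : a * ((nn d).eval v) * ((qq d).eval v) * ((hh d).eval u) = 0 := by
        simp only [hh, Polynomial.eval_sub, Polynomial.eval_mul]
        linear_combination (a * (qq d).eval u * (qq d).eval v) * hB
          - (a * (qq d).eval v * (qq d).derivative.eval u) * hA
      rcases mul_eq_zero.1 key with h | h
      · exact absurd h (mul_ne_zero (mul_ne_zero ha0 hnv) hqv)
      · exact h
    have hhv : (hh d).eval v = 0 := by
      have key : a * ((nn d).eval u) * ((qq d).eval u) * ((hh d).eval v) = 0 := by
        simp only [hh, Polynomial.eval_sub, Polynomial.eval_mul]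
        linear_combination (a * (qq d).eval v * (qq d).eval u) * hC
          - (a * (qq d).eval u * (qq d).derivative.eval v) * hA
      rcases mul_eq_zero.1 key with h | h
      · exact absurd h (mul_ne_zero (mul_ne_zero ha0 hnu) hqu)
      · exact h
    refine Or.inl (Or.inr ⟨(u, v), ⟨hhu, hhv⟩, ?_⟩)
    show (nn d).eval u * (nn d).eval v / ((qq d).eval u * (qq d).eval v) = a
    rw [div_eq_iff (mul_ne_zero hqu hqv)]
    linear_combination hA
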